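/- Let n, r be positive integers with gcd(r, n) = 1, and c, d integers with 𝒹₁ = gcd(c−d, n) and 𝒹₂ = gcd(c+(r−1)d, n). Then gcd(𝒹₂, d·n/𝒹₁) = 𝒹₂ if gcd(r, n) = 1; equivalently, 𝒹₂ divides d·n/𝒹₁. -/

import Mathlib

theorem stmt_14 (n r : ℕ) (hn : 0 < n) (hr : 0 < r) (hco : Nat.gcd r n = 1) (c d : ℤ) :
    Int.gcd ((Int.gcd (c + (r - 1) * d) n : ℤ)) (d * n / (Int.gcd (c - d) n : ℤ))
      = Int.gcd (c + (r - 1) * d) n ∧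
    ((Int.gcd (c + (r - 1) * d) n : ℤ)) ∣ (d * n / (Int.gcd (c - d) n : ℤ)) := by
  set d1 : ℕ := Int.gcd (c - d) n with hd1
  set d2 : ℕ := Int.gcd (c + (r - 1) * d) n with hd2
  set g : ℕ := Nat.gcd d1 d2 with hg
  have hd1n : (d1 : ℤ) ∣ (n : ℤ) := Int.gcd_dvd_right _ _
  have hd2n : (d2 : ℤ) ∣ (n : ℤ) := Int.gcd_dvd_right _ _
  have hd1pos : 0 < d1 := by
    have : (0:ℤ) < n := by exact_mod_cast hn
    exact Int.gcd_pos_of_ne_zero_right _ (by positivity)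
  -- g divides r * d
  have hgrd : (g : ℤ) ∣ (r : ℤ) * d := by
    have h1 : (g : ℤ) ∣ (c - d) := dvd_trans (by exact_mod_cast Nat.gcd_dvd_left d1 d2)
      (Int.gcd_dvd_left _ _)
    have h2 : (g : ℤ) ∣ (c + (r - 1) * d) := dvd_trans
      (by exact_mod_cast Nat.gcd_dvd_right d1 d2) (Int.gcd_dvd_left _ _)
    have := dvd_sub h2 h1
    have heq : (c + (r - 1) * d) - (c - d) = (r : ℤ) * d := by ring
    rwa [heq] at this
  -- g coprime to r
  have hgn : g ∣ n := by
    have : (d1 : ℤ) ∣ n := hd1n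
    exact dvd_trans (Nat.gcd_dvd_left d1 d2) (by exact_mod_cast this)
  have hcop : IsCoprime (g : ℤ) (r : ℤ) := by
    rw [Int.isCoprime_iff_gcd_eq_one]
    have : Nat.gcd g r = 1 := Nat.Coprime.symm
      (Nat.Coprime.coprime_dvd_right hgn hco)
    simpa [Int.gcd_natCast_natCast] using this
  have hgd : (g : ℤ) ∣ d := hcop.dvd_of_dvd_mul_right (mul_comm (r:ℤ) d ▸ hgrd)
  -- lcm divides n
  have hlcm : ((Nat.lcm d1 d2 : ℕ) : ℤ) ∣ (n : ℤ) := by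
    exact_mod_cast Nat.lcm_dvd (by exact_mod_cast hd1n) (by exact_mod_cast hd2n)
  -- d1 * d2 divides d * n
  have hkey : (d1 : ℤ) * d2 ∣ d * n := by
    have h : (d1 : ℤ) * d2 = (g : ℤ) * (Nat.lcm d1 d2 : ℕ) := by
      exact_mod_cast (Nat.gcd_mul_lcm d1 d2).symm
    rw [h]
    exact mul_dvd_mul hgd hlcm
  obtain ⟨k, hk⟩ := hkey
  have hdvd : (d2 : ℤ) ∣ d * n / (d1 : ℤ) := by
    have : d * n / (d1 : ℤ) = (d2 : ℤ) * k := by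
      rw [hk, mul_assoc, Int.mul_ediv_cancel_left]
      exact_mod_cast hd1pos.ne'
    rw [this]; exact Dvd.intro k rfl
  refine ⟨?_, hdvd⟩
  exact_mod_cast Int.gcd_eq_left (Int.natCast_nonneg _) hdvd
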